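/- Let C_5 denote the cycle graph on vertices {1,2,3,4,5}. For all real numbers λ₁ < λ₂ < λ₃, there exists a matrix A ∈ S(C_5) that has the Strong Spectral Property and whose spectrum is the multiset {λ₁, λ₁, λ₂, λ₂, λ₃} (ordered multiplicity list (2,2,1)). -/

import Mathlib

open Matrix

/-- The geometric multiplicity of `lam` as an eigenvalue of `A`:
`dim ker (A - lam • I)`. -/
noncomputable def multOf {m : Type*} [Fintype m] [DecidableEq m]
    (A : Matrix m m ℝ) (lam : ℝ) : ℕ :=
  Module.finrank ℝ (LinearMap.ker (A - lam • (1 : Matrix m m ℝ)).mulVecLin)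

/-- The Strong Spectral Property. -/
def HasSSP {m : Type*} [Fintype m] [DecidableEq m] (A : Matrix m m ℝ) : Prop :=
  ∀ X : Matrix m m ℝ, X.IsSymm → Matrix.hadamard A X = 0 →
    Matrix.hadamard (1 : Matrix m m ℝ) X = 0 → A * X - X * A = 0 → X = 0

/-- `A ∈ S(G)`: `A` is symmetric and its off-diagonal nonzero pattern is given by `G`. -/
def InS {m : Type*} [Fintype m] [DecidableEq m]
    (G : SimpleGraph m) (A : Matrix m m ℝ) : Prop :=
  A.IsSymm ∧ ∀ i j, i ≠ j → (A i j ≠ 0 ↔ G.Adj i j)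


/-- The cycle graph `C₅` on vertices `{0,1,2,3,4}`. -/
def cycle5 : SimpleGraph (Fin 5) :=
  SimpleGraph.fromRel fun i j => (i.val, j.val) ∈ [(0,1), (1,2), (2,3), (3,4), (0,4)]

/-- the candidate matrix -/
def Amat (sh b0 b1 b2 p q r : ℝ) : Matrix (Fin 5) (Fin 5) ℝ :=
  !![b0+sh, p, 0, 0, p;
     p, b1+sh, q, 0, 0;
     0, q, b2+sh, r, 0;
     0, 0, r, b2+sh, q;
     p, 0, 0, q, b1+sh]

section Identities

variable {sh d e b0 b1 b2 p q r w0 w1 w2 : ℝ}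

set_option maxHeartbeats 1000000 in
lemma eigen_w
    (hp : p = w1) (hb0 : b0 = w0 - b1) (hb2 : b2 = (e - w0 - b1)/2)
    (hr : r = b1 + b2)
    (hw1sq : w1^2 = w0*(e + b1 - w0)/2) (hw1 : 0 < w1)
    (hw2sq : w2^2 = ((e - w0)^2 - b1^2)/2)
    (hqw : q*w1 = w0*w2) :
    Amat sh b0 b1 b2 p q r *ᵥ ![w0,w1,w2,w2,w1] = (sh + e) • ![w0,w1,w2,w2,w1] := by
  funext i
  fin_cases i
  · simp [Amat, Matrix.mulVec, dotProduct, Fin.sum_univ_five] <;>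
      linear_combination (2*w1) * hp + (w0) * hb0 + 2 * hw1sq
  · simp [Amat, Matrix.mulVec, dotProduct, Fin.sum_univ_five] <;>
      (apply mul_right_cancel₀ hw1.ne';
       linear_combination (w0*w1) * hp + (w0 + b1 - e) * hw1sq + (w0) * hw2sq + (w2) * hqw)
  · simp [Amat, Matrix.mulVec, dotProduct, Fin.sum_univ_five] <;>
      linear_combination (2*w2) * hb2 + (w2) * hr + hqw
  · simp [Amat, Matrix.mulVec, dotProduct, Fin.sum_univ_five] <;>
      linear_combination (2*w2) * hb2 + (w2) * hr + hqw
  · simp [Amat, Matrix.mulVec, dotProduct, Fin.sum_univ_five] <;>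
      (apply mul_right_cancel₀ hw1.ne';
       linear_combination (w0*w1) * hp + (w0 + b1 - e) * hw1sq + (w0) * hw2sq + (w2) * hqw)

set_option maxHeartbeats 1000000 in
lemma eigen_a1 (hq2 : q^2 = d^2 - b1^2) (hr : r = b1 + b2) :
    Amat sh b0 b1 b2 p q r *ᵥ ![0, q, -(d+b1), d+b1, -q]
      = (sh - d) • ![0, q, -(d+b1), d+b1, -q] := by
  funext i
  fin_cases i
  · simp [Amat, Matrix.mulVec, dotProduct, Fin.sum_univ_five] <;> ring
  · simp [Amat, Matrix.mulVec, dotProduct, Fin.sum_univ_five] <;> ring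
  · simp [Amat, Matrix.mulVec, dotProduct, Fin.sum_univ_five] <;>
      linear_combination (b1 + d) * hr + hq2
  · simp [Amat, Matrix.mulVec, dotProduct, Fin.sum_univ_five] <;>
      linear_combination (-b1 - d) * hr - hq2
  · simp [Amat, Matrix.mulVec, dotProduct, Fin.sum_univ_five] <;> ring

set_option maxHeartbeats 1000000 in
lemma eigen_a2 (hq2 : q^2 = d^2 - b1^2) (hr : r = b1 + b2) :
    Amat sh b0 b1 b2 p q r *ᵥ ![0, q, d-b1, -(d-b1), -q]
      = (sh + d) • ![0, q, d-b1, -(d-b1), -q] := by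
  funext i
  fin_cases i
  · simp [Amat, Matrix.mulVec, dotProduct, Fin.sum_univ_five] <;> ring
  · simp [Amat, Matrix.mulVec, dotProduct, Fin.sum_univ_five] <;> ring
  · simp [Amat, Matrix.mulVec, dotProduct, Fin.sum_univ_five] <;>
      linear_combination (b1 - d) * hr + hq2
  · simp [Amat, Matrix.mulVec, dotProduct, Fin.sum_univ_five] <;>
      linear_combination (-b1 + d) * hr - hq2
  · simp [Amat, Matrix.mulVec, dotProduct, Fin.sum_univ_five] <;> ring

set_option maxHeartbeats 1000000 in
lemma eigen_s1
    (hp : p = w1) (hb0 : b0 = w0 - b1) (hb2 : b2 = (e - w0 - b1)/2)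
    (hr : r = b1 + b2)
    (hcon : w0*e - w0^2 - w0*b1 = d^2 - b1^2)
    (hw1sq : w1^2 = w0*(e + b1 - w0)/2)
    (hq2 : q^2 = d^2 - b1^2) :
    Amat sh b0 b1 b2 p q r *ᵥ
      ![(b1+d)*(b2+r+d) - q^2, -(p*(b2+r+d)), p*q, p*q, -(p*(b2+r+d))]
      = (sh - d) • ![(b1+d)*(b2+r+d) - q^2, -(p*(b2+r+d)), p*q, p*q, -(p*(b2+r+d))] := by
  funext i
  fin_cases i
  · simp [Amat, Matrix.mulVec, dotProduct, Fin.sum_univ_five] <;>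
      linear_combination (-2*r*w1 - 2*p*r - 2*b2*w1 - 2*b2*p - 2*d*w1 - 2*d*p) * hp
        + (-q^2 + b1*r + b1*b2 + d*r + d*b2 + d*b1 + d^2) * hb0
        + (-4*w1^2 + 2*b1*w0 - 2*b1^2 + 2*d*w0 + 2*d^2) * hb2
        + (-2*w1^2 + b1*w0 - b1^2 + d*w0 + d^2) * hr
        + (w0 - b1 - e) * hcon + (2*w0 - 2*e - 2*d) * hw1sq + (-w0 + b1 - d) * hq2
  · simp [Amat, Matrix.mulVec, dotProduct, Fin.sum_univ_five] <;> ring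
  · simp [Amat, Matrix.mulVec, dotProduct, Fin.sum_univ_five] <;> ring
  · simp [Amat, Matrix.mulVec, dotProduct, Fin.sum_univ_five] <;> ring
  · simp [Amat, Matrix.mulVec, dotProduct, Fin.sum_univ_five] <;> ring

set_option maxHeartbeats 1000000 in
lemma eigen_s2
    (hp : p = w1) (hb0 : b0 = w0 - b1) (hb2 : b2 = (e - w0 - b1)/2)
    (hr : r = b1 + b2)
    (hcon : w0*e - w0^2 - w0*b1 = d^2 - b1^2)
    (hw1sq : w1^2 = w0*(e + b1 - w0)/2)
    (hq2 : q^2 = d^2 - b1^2) :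
    Amat sh b0 b1 b2 p q r *ᵥ
      ![(b1-d)*(b2+r-d) - q^2, -(p*(b2+r-d)), p*q, p*q, -(p*(b2+r-d))]
      = (sh + d) • ![(b1-d)*(b2+r-d) - q^2, -(p*(b2+r-d)), p*q, p*q, -(p*(b2+r-d))] := by
  funext i
  fin_cases i
  · simp [Amat, Matrix.mulVec, dotProduct, Fin.sum_univ_five] <;>
      linear_combination (-2*r*w1 - 2*p*r - 2*b2*w1 - 2*b2*p + 2*d*w1 + 2*d*p) * hp
        + (-q^2 + b1*r + b1*b2 - d*r - d*b2 - d*b1 + d^2) * hb0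
        + (-4*w1^2 + 2*b1*w0 - 2*b1^2 - 2*d*w0 + 2*d^2) * hb2
        + (-2*w1^2 + b1*w0 - b1^2 - d*w0 + d^2) * hr
        + (w0 - b1 - e) * hcon + (2*w0 - 2*e + 2*d) * hw1sq + (-w0 + b1 + d) * hq2
  · simp [Amat, Matrix.mulVec, dotProduct, Fin.sum_univ_five] <;> ring
  · simp [Amat, Matrix.mulVec, dotProduct, Fin.sum_univ_five] <;> ring
  · simp [Amat, Matrix.mulVec, dotProduct, Fin.sum_univ_five] <;> ring
  · simp [Amat, Matrix.mulVec, dotProduct, Fin.sum_univ_five] <;> ring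

end Identities
set_option linter.unnecessarySeqFocus false

section Identities2
variable {sh d e b0 b1 b2 p q r w0 w1 w2 : ℝ}

set_option maxHeartbeats 2000000 in
lemma M2_eq
    (hp : p = w1) (hb0 : b0 = w0 - b1) (hb2 : b2 = (e - w0 - b1)/2)
    (hr : r = b1 + b2)
    (hcon : w0*e - w0^2 - w0*b1 = d^2 - b1^2)
    (hw1sq : w1^2 = w0*(e + b1 - w0)/2) (hw1 : 0 < w1)
    (hw2sq : w2^2 = ((e - w0)^2 - b1^2)/2)
    (hqw : q*w1 = w0*w2)
    (hq2 : q^2 = d^2 - b1^2) :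
    (Amat sh b0 b1 b2 p q r - (sh - d) • (1 : Matrix (Fin 5) (Fin 5) ℝ)) *
    (Amat sh b0 b1 b2 p q r - (sh + d) • (1 : Matrix (Fin 5) (Fin 5) ℝ)) =
    Matrix.of (fun i j => ![w0,w1,w2,w2,w1] i * ![w0,w1,w2,w2,w1] j) := by
  ext i j
  fin_cases i <;> fin_cases j <;>
    simp [Amat, Matrix.mul_apply, Fin.sum_univ_five, Matrix.one_apply,
      Matrix.vecHead, Matrix.vecTail, Function.comp]
  · linear_combination (2*w1 + 2*p) * hp + (w0 - b1 + b0) * hb0 + hcon + 2 * hw1sq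
  · linear_combination (b1 + b0) * hp + w1 * hb0
  · linear_combination q * hp + hqw
  · linear_combination q * hp + hqw
  · linear_combination (b1 + b0) * hp + w1 * hb0
  · linear_combination (b1 + b0) * hp + w1 * hb0
  · linear_combination (w1 + p) * hp + hq2
  · apply mul_right_cancel₀ hw1.ne'
    linear_combination (q*w1) * hb2 + (-w2) * hw1sq + (-1/2*w0 + 1/2*b1 + 1/2*e) * hqw
  · apply mul_right_cancel₀ hw1.ne'
    linear_combination (q*w1) * hb2 + (q*w1) * hr + (-w2) * hw1sq + (-1/2*w0 + 1/2*b1 + 1/2*e) * hqw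
  · linear_combination (w1 + p) * hp
  · linear_combination q * hp + hqw
  · apply mul_right_cancel₀ hw1.ne'
    linear_combination (q*w1) * hb2 + (-w2) * hw1sq + (-1/2*w0 + 1/2*b1 + 1/2*e) * hqw
  · linear_combination (-w0 + 2*b2 + b1 + e) * hb2 + (r + b2 + b1) * hr + (-1) * hw2sq + hq2
  · linear_combination (-w0 + 2*b2 + b1 + e) * hb2 + (2*b2) * hr + (-1) * hw2sq
  · apply mul_right_cancel₀ hw1.ne'
    linear_combination (q*w1) * hb2 + (q*w1) * hr + (-w2) * hw1sq + (-1/2*w0 + 1/2*b1 + 1/2*e) * hqw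
  · linear_combination q * hp + hqw
  · apply mul_right_cancel₀ hw1.ne'
    linear_combination (q*w1) * hb2 + (q*w1) * hr + (-w2) * hw1sq + (-1/2*w0 + 1/2*b1 + 1/2*e) * hqw
  · linear_combination (-w0 + 2*b2 + b1 + e) * hb2 + (2*b2) * hr + (-1) * hw2sq
  · linear_combination (-w0 + 2*b2 + b1 + e) * hb2 + (r + b2 + b1) * hr + (-1) * hw2sq + hq2
  · apply mul_right_cancel₀ hw1.ne'
    linear_combination (q*w1) * hb2 + (-w2) * hw1sq + (-1/2*w0 + 1/2*b1 + 1/2*e) * hqw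
  · linear_combination (b1 + b0) * hp + w1 * hb0
  · linear_combination (w1 + p) * hp
  · apply mul_right_cancel₀ hw1.ne'
    linear_combination (q*w1) * hb2 + (q*w1) * hr + (-w2) * hw1sq + (-1/2*w0 + 1/2*b1 + 1/2*e) * hqw
  · apply mul_right_cancel₀ hw1.ne'
    linear_combination (q*w1) * hb2 + (-w2) * hw1sq + (-1/2*w0 + 1/2*b1 + 1/2*e) * hqw
  · linear_combination (w1 + p) * hp + hq2

end Identities2

set_option maxHeartbeats 2000000 in
lemma buildC5 (sh d e b0 b1 b2 p q r w0 w1 w2 : ℝ)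
    (hd : 0 < d) (hde : d < e) (hb1 : 0 < b1) (hb1d : b1 < d)
    (hp : p = w1) (hb0 : b0 = w0 - b1) (hb2 : b2 = (e - w0 - b1)/2)
    (hr : r = b1 + b2)
    (hcon : w0*e - w0^2 - w0*b1 = d^2 - b1^2)
    (hw1sq : w1^2 = w0*(e + b1 - w0)/2) (hw1 : 0 < w1)
    (hw2sq : w2^2 = ((e - w0)^2 - b1^2)/2) (hw2 : 0 < w2)
    (hqw : q*w1 = w0*w2) (hw0 : 0 < w0)
    (hK : 3*w0 - e - b1 ≠ 0) :
    ∃ A : Matrix (Fin 5) (Fin 5) ℝ, InS cycle5 A ∧ HasSSP A ∧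
      multOf A (sh - d) = 2 ∧ multOf A (sh + d) = 2 ∧ multOf A (sh + e) = 1 ∧
      ∀ t, t ≠ sh - d → t ≠ sh + d → t ≠ sh + e → multOf A t = 0 := by
  have hq2 : q^2 = d^2 - b1^2 := by
    apply mul_right_cancel₀ (mul_ne_zero hw1.ne' hw1.ne')
    linear_combination (-1/2*w0^2 + 1/2*b1*w0 + 1/2*e*w0) * hcon + (b1^2 - d^2) * hw1sq
      + (w0^2) * hw2sq + (w0*w2 + q*w1) * hqw
  have hrw : w1^2 = w0*r := by
    linear_combination (-w0) * hb2 + (-w0) * hr + hw1sq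
  have h2b2r : w2^2 = 2*b2*r := by
    linear_combination (w0 - 2*b2 - b1 - e) * hb2 + (-2*b2) * hr + hw2sq
  have hq : 0 < q := by nlinarith [mul_pos hw0 hw2, sq_nonneg w1]
  have hr0 : 0 < r := by nlinarith [sq_nonneg w1, mul_pos hw0 hw0]
  have hb2pos : 0 < b2 := by nlinarith [sq_nonneg w2]
  have hp0 : 0 < p := hp ▸ hw1
  have hInS : InS cycle5 (Amat sh b0 b1 b2 p q r) := by
    constructor
    · show (Amat sh b0 b1 b2 p q r)ᵀ = _
      ext i j
      fin_cases i <;> fin_cases j <;> simp [Amat, Matrix.vecHead, Matrix.vecTail, Function.comp]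
    · intro i j hij
      fin_cases i <;> fin_cases j <;>
        first
          | exact absurd rfl hij
          | (simp [Amat, cycle5, SimpleGraph.fromRel_adj, hp0.ne', hq.ne', hr0.ne', Matrix.vecHead, Matrix.vecTail, Function.comp] <;> decide)
  have hSSP : HasSSP (Amat sh b0 b1 b2 p q r) := by
    intro X hXs hAX hIX hcom
    have hsym' : ∀ i j, X j i = X i j := fun i j => congrFun (congrFun hXs i) j
    have hdg : ∀ i, X i i = 0 := by
      intro i
      have h := congrFun (congrFun hIX i) i
      simpa [Matrix.hadamard] using h
    have hedge : ∀ (i j : Fin 5), Amat sh b0 b1 b2 p q r i j ≠ 0 → X i j = 0 := by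
      intro i j hij
      have h := congrFun (congrFun hAX i) j
      simp only [Matrix.hadamard_apply, Matrix.zero_apply] at h
      exact (mul_eq_zero.mp h).resolve_left hij
    have hX01 : X 0 1 = 0 := hedge 0 1 (by simp [Amat]; exact hp0.ne')
    have hX10 : X 1 0 = 0 := hedge 1 0 (by simp [Amat]; exact hp0.ne')
    have hX12 : X 1 2 = 0 := hedge 1 2 (by simp [Amat]; exact hq.ne')
    have hX21 : X 2 1 = 0 := hedge 2 1 (by simp [Amat]; exact hq.ne')
    have hX23 : X 2 3 = 0 := hedge 2 3 (by simp [Amat]; exact hr0.ne')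
    have hX32 : X 3 2 = 0 := hedge 3 2 (by simp [Amat]; exact hr0.ne')
    have hX34 : X 3 4 = 0 := hedge 3 4 (by simp [Amat]; exact hq.ne')
    have hX43 : X 4 3 = 0 := hedge 4 3 (by simp [Amat]; exact hq.ne')
    have hX04 : X 0 4 = 0 := hedge 0 4 (by simp [Amat]; exact hp0.ne')
    have hX40 : X 4 0 = 0 := hedge 4 0 (by simp [Amat]; exact hp0.ne')
    have hD0 : X 0 0 = 0 := hdg 0
    have hD1 : X 1 1 = 0 := hdg 1
    have hD2 : X 2 2 = 0 := hdg 2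
    have hD3 : X 3 3 = 0 := hdg 3
    have hD4 : X 4 4 = 0 := hdg 4
    have h20 : X 2 0 = X 0 2 := hsym' 0 2
    have h30 : X 3 0 = X 0 3 := hsym' 0 3
    have h31 : X 3 1 = X 1 3 := hsym' 1 3
    have h41 : X 4 1 = X 1 4 := hsym' 1 4
    have h42 : X 4 2 = X 2 4 := hsym' 2 4
    have e01 : p * X 1 4 - q * X 0 2 = 0 := by
      have h := congrFun (congrFun hcom 0) 1
      simp [Amat, Matrix.mul_apply, Matrix.vecMul, dotProduct, Fin.sum_univ_five, Matrix.vecHead, Matrix.vecTail,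
        Function.comp, hX01, hX10, hX12, hX21, hX23, hX32, hX34, hX43, hX04, hX40,
        hD0, hD1, hD2, hD3, hD4, h20, h30, h31, h41, h42] at h
      linear_combination h
    have e04 : p * X 1 4 - q * X 0 3 = 0 := by
      have h := congrFun (congrFun hcom 0) 4
      simp [Amat, Matrix.mul_apply, Matrix.vecMul, dotProduct, Fin.sum_univ_five, Matrix.vecHead, Matrix.vecTail,
        Function.comp, hX01, hX10, hX12, hX21, hX23, hX32, hX34, hX43, hX04, hX40,
        hD0, hD1, hD2, hD3, hD4, h20, h30, h31, h41, h42] at h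
      linear_combination h
    have e02 : (b0 - b2) * X 0 2 + p * X 2 4 - r * X 0 3 = 0 := by
      have h := congrFun (congrFun hcom 0) 2
      simp [Amat, Matrix.mul_apply, Matrix.vecMul, dotProduct, Fin.sum_univ_five, Matrix.vecHead, Matrix.vecTail,
        Function.comp, hX01, hX10, hX12, hX21, hX23, hX32, hX34, hX43, hX04, hX40,
        hD0, hD1, hD2, hD3, hD4, h20, h30, h31, h41, h42] at h
      linear_combination h
    have e03 : (b0 - b2) * X 0 3 + p * X 1 3 - r * X 0 2 = 0 := by
      have h := congrFun (congrFun hcom 0) 3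
      simp [Amat, Matrix.mul_apply, Matrix.vecMul, dotProduct, Fin.sum_univ_five, Matrix.vecHead, Matrix.vecTail,
        Function.comp, hX01, hX10, hX12, hX21, hX23, hX32, hX34, hX43, hX04, hX40,
        hD0, hD1, hD2, hD3, hD4, h20, h30, h31, h41, h42] at h
      linear_combination h
    have e12 : p * X 0 2 - r * X 1 3 = 0 := by
      have h := congrFun (congrFun hcom 1) 2
      simp [Amat, Matrix.mul_apply, Matrix.vecMul, dotProduct, Fin.sum_univ_five, Matrix.vecHead, Matrix.vecTail,
        Function.comp, hX01, hX10, hX12, hX21, hX23, hX32, hX34, hX43, hX04, hX40,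
        hD0, hD1, hD2, hD3, hD4, h20, h30, h31, h41, h42] at h
      linear_combination h
    have hbe : X 0 3 = X 0 2 := by
      have h : q * (X 0 3 - X 0 2) = 0 := by linear_combination e01 - e04
      have := (mul_eq_zero.mp h).resolve_left hq.ne'
      linarith [this]
    have hep : X 2 4 = X 1 3 := by
      have h : p * (X 2 4 - X 1 3) = 0 := by
        linear_combination e02 - e03 + (b0 - b2 + r) * hbe
      have := (mul_eq_zero.mp h).resolve_left hp0.ne'
      linarith [this]
    have hal : X 0 2 = 0 := by
      have h : (r * (3*w0 - e - b1)) * X 0 2 = 0 := by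
        linear_combination r * e02 + p * e12 - (r*p) * hep + (r^2) * hbe
          - (X 0 2 * (w1+p)) * hp - (X 0 2 * r) * hb0
          - (X 0 2 * (-w0-2*b2-2*b1)) * hb2 - (X 0 2 * (-2*w0-r-2*b2-b1+e)) * hr
          - (X 0 2) * hw1sq
      exact (mul_eq_zero.mp h).resolve_left (mul_ne_zero hr0.ne' hK)
    have hga : X 1 3 = 0 := by
      have h : r * X 1 3 = 0 := by linear_combination -e12 + p * hal
      exact (mul_eq_zero.mp h).resolve_left hr0.ne'
    have hdel : X 1 4 = 0 := by
      have h : p * X 1 4 = 0 := by linear_combination e01 + q * hal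
      exact (mul_eq_zero.mp h).resolve_left hp0.ne'
    have hep0 : X 2 4 = 0 := by rw [hep]; exact hga
    have hbe0 : X 0 3 = 0 := by rw [hbe]; exact hal
    have hX20 : X 2 0 = 0 := by rw [h20]; exact hal
    have hX30 : X 3 0 = 0 := by rw [h30]; exact hbe0
    have hX31 : X 3 1 = 0 := by rw [h31]; exact hga
    have hX41 : X 4 1 = 0 := by rw [h41]; exact hdel
    have hX42 : X 4 2 = 0 := by rw [h42]; exact hep0
    ext i j
    fin_cases i <;> fin_cases j <;> simp only [Matrix.zero_apply] <;> assumption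
  -- ==== multOf machinery ====
  set M := Amat sh b0 b1 b2 p q r with hM
  set wv : Fin 5 → ℝ := ![w0,w1,w2,w2,w1] with hwv
  set va1 : Fin 5 → ℝ := ![0, q, -(d+b1), d+b1, -q] with hva1
  set vs1 : Fin 5 → ℝ := ![(b1+d)*(b2+r+d) - q^2, -(p*(b2+r+d)), p*q, p*q, -(p*(b2+r+d))] with hvs1
  set va2 : Fin 5 → ℝ := ![0, q, d-b1, -(d-b1), -q] with hva2
  set vs2 : Fin 5 → ℝ := ![(b1-d)*(b2+r-d) - q^2, -(p*(b2+r-d)), p*q, p*q, -(p*(b2+r-d))] with hvs2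
  have hAw : M *ᵥ wv = (sh + e) • wv := eigen_w hp hb0 hb2 hr hw1sq hw1 hw2sq hqw
  have hAva1 : M *ᵥ va1 = (sh - d) • va1 := eigen_a1 hq2 hr
  have hAvs1 : M *ᵥ vs1 = (sh - d) • vs1 := eigen_s1 hp hb0 hb2 hr hcon hw1sq hq2
  have hAva2 : M *ᵥ va2 = (sh + d) • va2 := eigen_a2 hq2 hr
  have hAvs2 : M *ᵥ vs2 = (sh + d) • vs2 := eigen_s2 hp hb0 hb2 hr hcon hw1sq hq2
  have hM2 : (M - (sh - d) • (1 : Matrix (Fin 5) (Fin 5) ℝ)) *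
      (M - (sh + d) • (1 : Matrix (Fin 5) (Fin 5) ℝ)) =
      Matrix.of (fun i j => wv i * wv j) :=
    M2_eq hp hb0 hb2 hr hcon hw1sq hw1 hw2sq hqw hq2
  have hker : ∀ (lam : ℝ) (x : Fin 5 → ℝ),
      x ∈ LinearMap.ker (M - lam • (1 : Matrix (Fin 5) (Fin 5) ℝ)).mulVecLin ↔
        M *ᵥ x = lam • x := by
    intro lam x
    rw [LinearMap.mem_ker, Matrix.mulVecLin_apply, Matrix.sub_mulVec,
      Matrix.smul_mulVec, Matrix.one_mulVec, sub_eq_zero]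
  have hWmul : ∀ x : Fin 5 → ℝ,
      (Matrix.of fun i j => wv i * wv j) *ᵥ x = (wv ⬝ᵥ x) • wv := by
    intro x
    funext i
    fin_cases i <;>
      (simp [hwv, Matrix.mulVec, dotProduct, Fin.sum_univ_five]; ring)
  have hquad : ∀ (lam : ℝ) (x : Fin 5 → ℝ), M *ᵥ x = lam • x →
      ((lam - (sh - d)) * (lam - (sh + d))) • x = (wv ⬝ᵥ x) • wv := by
    intro lam x hx
    have h1 : (M - (sh + d) • (1 : Matrix (Fin 5) (Fin 5) ℝ)) *ᵥ x = (lam - (sh+d)) • x := by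
      rw [Matrix.sub_mulVec, Matrix.smul_mulVec, Matrix.one_mulVec, hx]
      funext i
      simp only [Pi.smul_apply, Pi.sub_apply, smul_eq_mul]
      ring
    have h2 : (M - (sh - d) • (1 : Matrix (Fin 5) (Fin 5) ℝ)) *ᵥ x = (lam - (sh-d)) • x := by
      rw [Matrix.sub_mulVec, Matrix.smul_mulVec, Matrix.one_mulVec, hx]
      funext i
      simp only [Pi.smul_apply, Pi.sub_apply, smul_eq_mul]
      ring
    calc ((lam - (sh - d)) * (lam - (sh + d))) • x
        = (lam - (sh-d)) • ((lam - (sh+d)) • x) := by rw [smul_smul]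
      _ = (M - (sh - d) • (1 : Matrix (Fin 5) (Fin 5) ℝ)) *ᵥ
            ((M - (sh + d) • (1 : Matrix (Fin 5) (Fin 5) ℝ)) *ᵥ x) := by
          rw [h1, Matrix.mulVec_smul, h2, smul_comm]
      _ = ((M - (sh - d) • (1 : Matrix (Fin 5) (Fin 5) ℝ)) *
            (M - (sh + d) • (1 : Matrix (Fin 5) (Fin 5) ℝ))) *ᵥ x := by
          rw [Matrix.mulVec_mulVec]
      _ = (wv ⬝ᵥ x) • wv := by rw [hM2, hWmul]
  have hcube : ∀ (lam : ℝ) (x : Fin 5 → ℝ), M *ᵥ x = lam • x →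
      ((lam - (sh - d)) * (lam - (sh + d)) * (lam - (sh + e))) • x = 0 := by
    intro lam x hx
    have h := hquad lam x hx
    have h2 := congrArg (fun v => M *ᵥ v) h
    simp only [Matrix.mulVec_smul, hx, hAw] at h2
    have h3 := congrArg (fun v => (sh+e) • v) h
    funext i
    have e2 := congrFun h2 i
    have e3 := congrFun h3 i
    simp only [Pi.smul_apply, smul_eq_mul, Pi.zero_apply] at e2 e3 ⊢
    linear_combination e2 - e3
  set U := LinearMap.ker (M - (sh - d) • (1 : Matrix (Fin 5) (Fin 5) ℝ)).mulVecLin with hU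
  set V := LinearMap.ker (M - (sh + d) • (1 : Matrix (Fin 5) (Fin 5) ℝ)).mulVecLin with hV
  set Wk := LinearMap.ker (M - (sh + e) • (1 : Matrix (Fin 5) (Fin 5) ℝ)).mulVecLin with hWk
  have hfin5 : Module.finrank ℝ (Fin 5 → ℝ) = 5 := by simp
  -- Wk = span {wv}
  have hWkspan : Wk = Submodule.span ℝ {wv} := by
    apply le_antisymm
    · intro x hx
      have hx' := (hker _ _).mp hx
      have h := hquad (sh+e) x hx'
      have hc : (sh + e - (sh - d)) * (sh + e - (sh + d)) = (e+d)*(e-d) := by ring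
      rw [hc] at h
      have hne : ((e+d)*(e-d)) ≠ 0 := (mul_pos (by linarith) (by linarith)).ne'
      rw [Submodule.mem_span_singleton]
      refine ⟨((e+d)*(e-d))⁻¹ * (wv ⬝ᵥ x), ?_⟩
      rw [mul_smul, ← h, smul_smul, inv_mul_cancel₀ hne, one_smul]
    · rw [Submodule.span_le, Set.singleton_subset_iff]
      exact (hker _ _).mpr hAw
  have hwv0 : wv ≠ 0 := by
    intro h
    have h1 := congrFun h 1
    simp [hwv] at h1
    exact hw1.ne' h1
  have hWk1 : Module.finrank ℝ Wk = 1 := by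
    rw [hWkspan]
    exact finrank_span_singleton hwv0
  -- lower bounds
  have hpq : (0:ℝ) < p * q := mul_pos hp0 hq
  have hli1 : LinearIndependent ℝ ![va1, vs1] := by
    rw [LinearIndependent.pair_iff]
    intro s t hst
    have h2 := congrFun hst 2
    have h3 := congrFun hst 3
    simp [hva1, hvs1] at h2 h3
    have ht : t = 0 := by
      have h' : t * (p*q) = 0 := by linear_combination (1/2)*h2 + (1/2)*h3
      exact (mul_eq_zero.mp h').resolve_right hpq.ne'
    refine ⟨?_, ht⟩
    have hs' : s * (d + b1) = 0 := by linear_combination h3 - (p*q) * ht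
    exact (mul_eq_zero.mp hs').resolve_right (by positivity : (0:ℝ) < d + b1).ne'
  have hli2 : LinearIndependent ℝ ![va2, vs2] := by
    rw [LinearIndependent.pair_iff]
    intro s t hst
    have h2 := congrFun hst 2
    have h3 := congrFun hst 3
    simp [hva2, hvs2] at h2 h3
    have ht : t = 0 := by
      have h' : t * (p*q) = 0 := by linear_combination (1/2)*h2 + (1/2)*h3
      exact (mul_eq_zero.mp h').resolve_right hpq.ne'
    refine ⟨?_, ht⟩
    have hs' : s * (d - b1) = 0 := by linear_combination h2 - (p*q) * ht
    exact (mul_eq_zero.mp hs').resolve_right (by linarith : (0:ℝ) < d - b1).ne'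
  have hspan1 : Submodule.span ℝ (Set.range ![va1, vs1]) ≤ U := by
    rw [Submodule.span_le]
    rintro x ⟨i, rfl⟩
    fin_cases i
    · exact (hker (sh - d) va1).mpr hAva1
    · exact (hker (sh - d) vs1).mpr hAvs1
  have hspan2 : Submodule.span ℝ (Set.range ![va2, vs2]) ≤ V := by
    rw [Submodule.span_le]
    rintro x ⟨i, rfl⟩
    fin_cases i
    · exact (hker (sh + d) va2).mpr hAva2
    · exact (hker (sh + d) vs2).mpr hAvs2
  have h2U : 2 ≤ Module.finrank ℝ U := by
    have hc := finrank_span_eq_card hli1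
    simp only [Fintype.card_fin] at hc
    have hm := Submodule.finrank_mono hspan1
    omega
  have h2V : 2 ≤ Module.finrank ℝ V := by
    have hc := finrank_span_eq_card hli2
    simp only [Fintype.card_fin] at hc
    have hm := Submodule.finrank_mono hspan2
    omega
  -- disjointness
  have hUV : U ⊓ V = ⊥ := by
    rw [eq_bot_iff]
    rintro x hx
    have hxu := (hker _ _).mp (Submodule.mem_inf.mp hx).1
    have hxv := (hker _ _).mp (Submodule.mem_inf.mp hx).2
    rw [Submodule.mem_bot]
    funext i
    have hh := congrFun (hxu.symm.trans hxv) i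
    simp only [Pi.smul_apply, smul_eq_mul, Pi.zero_apply] at hh ⊢
    have h2 : (2*d) * x i = 0 := by linear_combination (-1) * hh
    exact (mul_eq_zero.mp h2).resolve_left (by positivity : (0:ℝ) < 2*d).ne'
  have hUVW : (U ⊔ V) ⊓ Wk = ⊥ := by
    rw [eq_bot_iff]
    rintro x hx
    obtain ⟨u, hu, v, hv, rfl⟩ := Submodule.mem_sup.mp (Submodule.mem_inf.mp hx).1
    have hw := (hker _ _).mp (Submodule.mem_inf.mp hx).2
    have hu' := (hker _ _).mp hu
    have hv' := (hker _ _).mp hv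
    rw [Matrix.mulVec_add, hu', hv'] at hw
    -- (sh-d)•u + (sh+d)•v = (sh+e)•(u+v)
    have hne : (-(d+e)) ≠ 0 := (by linarith : (-(d+e)) < 0).ne
    have h4 : (-(d+e)) • u = (e-d) • v := by
      funext i
      have hh := congrFun hw i
      simp only [Pi.smul_apply, Pi.add_apply, smul_eq_mul] at hh ⊢
      linear_combination hh
    have huV : u ∈ V := by
      have hrep : u = (-(d+e))⁻¹ • ((e-d) • v) := by
        rw [← h4, smul_smul, inv_mul_cancel₀ hne, one_smul]
      rw [hrep]
      exact Submodule.smul_mem _ _ (Submodule.smul_mem _ _ hv)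
    have hu0 : u = 0 := by
      have hmem : u ∈ U ⊓ V := Submodule.mem_inf.mpr ⟨hu, huV⟩
      rwa [hUV, Submodule.mem_bot] at hmem
    have hv0 : v = 0 := by
      have h5 : (e-d) • v = 0 := by rw [← h4, hu0, smul_zero]
      exact (smul_eq_zero.mp h5).resolve_left (by linarith : (0:ℝ) < e - d).ne'
    rw [Submodule.mem_bot, hu0, hv0, add_zero]
  -- dimension bookkeeping
  have hsupUV : Module.finrank ℝ (U ⊔ V : Submodule ℝ (Fin 5 → ℝ)) =
      Module.finrank ℝ U + Module.finrank ℝ V := by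
    have h := Submodule.finrank_sup_add_finrank_inf_eq U V
    have h0 : Module.finrank ℝ (U ⊓ V : Submodule ℝ (Fin 5 → ℝ)) = 0 :=
      Submodule.finrank_eq_zero.mpr hUV
    omega
  have hsupUVW : Module.finrank ℝ ((U ⊔ V) ⊔ Wk : Submodule ℝ (Fin 5 → ℝ)) =
      Module.finrank ℝ U + Module.finrank ℝ V + Module.finrank ℝ Wk := by
    have h := Submodule.finrank_sup_add_finrank_inf_eq (U ⊔ V) Wk
    have h0 : Module.finrank ℝ ((U ⊔ V) ⊓ Wk : Submodule ℝ (Fin 5 → ℝ)) = 0 :=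
      Submodule.finrank_eq_zero.mpr hUVW
    omega
  have hbound : Module.finrank ℝ U + Module.finrank ℝ V + Module.finrank ℝ Wk ≤ 5 := by
    have h := Submodule.finrank_le ((U ⊔ V) ⊔ Wk : Submodule ℝ (Fin 5 → ℝ))
    rw [hfin5] at h
    omega
  have hU2 : Module.finrank ℝ U = 2 := by omega
  have hV2 : Module.finrank ℝ V = 2 := by omega
  refine ⟨M, hInS, hSSP, hU2, hV2, hWk1, ?_⟩
  intro t ht1 ht2 ht3
  have hker0 : LinearMap.ker (M - t • (1 : Matrix (Fin 5) (Fin 5) ℝ)).mulVecLin = ⊥ := by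
    rw [eq_bot_iff]
    intro x hx
    have hx' := (hker _ _).mp hx
    have h := hcube t x hx'
    have hne : (t - (sh - d)) * (t - (sh + d)) * (t - (sh + e)) ≠ 0 :=
      mul_ne_zero (mul_ne_zero (sub_ne_zero.mpr ht1) (sub_ne_zero.mpr ht2)) (sub_ne_zero.mpr ht3)
    rw [Submodule.mem_bot]
    exact (smul_eq_zero.mp h).resolve_left hne
  unfold multOf
  rw [hker0]
  exact finrank_bot ℝ _

lemma keyC5 (sh d e ξ : ℝ) (hd : 0 < d) (hde : d < e)
    (hξ0 : 0 < ξ) (hξd : ξ < d) (hξD : 10*d*ξ ≤ (e-d)^2)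
    (hf : 5*ξ^2 + 2*(e-5*d)*ξ + 2*(e+d)*(e-2*d) ≠ 0) :
    ∃ A : Matrix (Fin 5) (Fin 5) ℝ, InS cycle5 A ∧ HasSSP A ∧
      multOf A (sh - d) = 2 ∧ multOf A (sh + d) = 2 ∧ multOf A (sh + e) = 1 ∧
      ∀ t, t ≠ sh - d → t ≠ sh + d → t ≠ sh + e → multOf A t = 0 := by
  obtain ⟨b1, hb1def⟩ : ∃ b1 : ℝ, b1 = d - ξ := ⟨_, rfl⟩
  have hb1 : 0 < b1 := by rw [hb1def]; linarith
  have hb1d : b1 < d := by rw [hb1def]; linarith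
  have hD : 0 < 5*b1^2 - 2*e*b1 + e^2 - 4*d^2 := by
    rw [hb1def]
    nlinarith [mul_pos (show (0:ℝ) < e by linarith) hξ0, sq_nonneg ξ]
  obtain ⟨s, hsdef⟩ : ∃ s : ℝ, s = Real.sqrt (5*b1^2 - 2*e*b1 + e^2 - 4*d^2) := ⟨_, rfl⟩
  have hs2 : s^2 = 5*b1^2 - 2*e*b1 + e^2 - 4*d^2 := by rw [hsdef]; exact Real.sq_sqrt hD.le
  have hs0 : 0 < s := by rw [hsdef]; exact Real.sqrt_pos.mpr hD
  obtain ⟨w0, hw0def⟩ : ∃ w0 : ℝ, w0 = (e - b1 + s)/2 := ⟨_, rfl⟩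
  have hw0 : 0 < w0 := by rw [hw0def]; nlinarith
  have hcon : w0*e - w0^2 - w0*b1 = d^2 - b1^2 := by
    linear_combination (-1/4) * hs2 + (-w0 - 1/2*b1 - 1/2*s + 1/2*e) * hw0def
  -- bounds on s
  have hsub : s < e + 3*b1 := by
    nlinarith [hs2, sq_nonneg (s - (e + 3*b1)), mul_pos hb1 (show (0:ℝ) < e by linarith)]
  have hsub2 : s < e - b1 := by
    nlinarith [hs2]
  have harg1 : 0 < w0*(e + b1 - w0)/2 := by
    have h1 : 0 < e + b1 - w0 := by rw [hw0def]; linarith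
    positivity
  have harg2 : 0 < ((e - w0)^2 - b1^2)/2 := by
    have h1 : b1 < e - w0 := by rw [hw0def]; linarith
    nlinarith [h1, hb1]
  obtain ⟨w1, hw1def⟩ : ∃ w1 : ℝ, w1 = Real.sqrt (w0*(e + b1 - w0)/2) := ⟨_, rfl⟩
  have hw1sq : w1^2 = w0*(e + b1 - w0)/2 := by rw [hw1def]; exact Real.sq_sqrt harg1.le
  have hw1 : 0 < w1 := by rw [hw1def]; exact Real.sqrt_pos.mpr harg1
  obtain ⟨w2, hw2def⟩ : ∃ w2 : ℝ, w2 = Real.sqrt (((e - w0)^2 - b1^2)/2) := ⟨_, rfl⟩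
  have hw2sq : w2^2 = ((e - w0)^2 - b1^2)/2 := by rw [hw2def]; exact Real.sq_sqrt harg2.le
  have hw2 : 0 < w2 := by rw [hw2def]; exact Real.sqrt_pos.mpr harg2
  obtain ⟨q, hqdef⟩ : ∃ q : ℝ, q = w0*w2/w1 := ⟨_, rfl⟩
  have hqw : q*w1 = w0*w2 := by
    rw [hqdef]
    field_simp
  have hK : 3*w0 - e - b1 ≠ 0 := by
    intro h0
    apply hf
    have hs' : s = (5*b1 - e)/3 := by linear_combination (2/3) * h0 - 2 * hw0def
    linear_combination (9/4*s + 15/4*b1 - 3/4*e) * hs'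
      + (-5*b1 + 5*ξ + 2*e - 5*d) * hb1def + (-9/4) * hs2
  exact buildC5 sh d e (w0 - b1) b1 ((e - w0 - b1)/2) w1 q (b1 + (e - w0 - b1)/2) w0 w1 w2
    hd hde hb1 hb1d rfl rfl rfl rfl hcon hw1sq hw1 hw2sq hw2 hqw hw0 hK

/-- For all `λ₁ < λ₂ < λ₃` there is an SSP matrix in `S(C₅)` with spectrum
`{λ₁, λ₁, λ₂, λ₂, λ₃}` (ordered multiplicity list `(2,2,1)`). -/
theorem c5_oml221_spectrally_arbitrary_SSP (l1 l2 l3 : ℝ)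
    (h12 : l1 < l2) (h23 : l2 < l3) :
    ∃ A : Matrix (Fin 5) (Fin 5) ℝ, InS cycle5 A ∧ HasSSP A ∧
      multOf A l1 = 2 ∧ multOf A l2 = 2 ∧ multOf A l3 = 1 ∧
      ∀ t, t ≠ l1 → t ≠ l2 → t ≠ l3 → multOf A t = 0 := by
  obtain ⟨sh, hsh⟩ : ∃ x : ℝ, x = (l1+l2)/2 := ⟨_, rfl⟩
  obtain ⟨d, hdd⟩ : ∃ x : ℝ, x = (l2-l1)/2 := ⟨_, rfl⟩
  obtain ⟨e, hee⟩ : ∃ x : ℝ, x = l3 - (l1+l2)/2 := ⟨_, rfl⟩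
  have hd : 0 < d := by rw [hdd]; linarith
  have hde : d < e := by rw [hdd, hee]; linarith
  have hl1 : sh - d = l1 := by rw [hsh, hdd]; ring
  have hl2 : sh + d = l2 := by rw [hsh, hdd]; ring
  have hl3 : sh + e = l3 := by rw [hsh, hee]; ring
  have key' : ∀ ξ : ℝ, 0 < ξ → ξ < d → 10*d*ξ ≤ (e-d)^2 →
      5*ξ^2 + 2*(e-5*d)*ξ + 2*(e+d)*(e-2*d) ≠ 0 →
      ∃ A : Matrix (Fin 5) (Fin 5) ℝ, InS cycle5 A ∧ HasSSP A ∧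
        multOf A l1 = 2 ∧ multOf A l2 = 2 ∧ multOf A l3 = 1 ∧
        ∀ t, t ≠ l1 → t ≠ l2 → t ≠ l3 → multOf A t = 0 := by
    intro ξ h1 h2 h3 h4
    obtain ⟨A, hA1, hA2, hA3, hA4, hA5, hA6⟩ := keyC5 sh d e ξ hd hde h1 h2 h3 h4
    rw [hl1] at hA3
    rw [hl2] at hA4
    rw [hl3] at hA5
    refine ⟨A, hA1, hA2, hA3, hA4, hA5, ?_⟩
    intro t ht1 ht2 ht3
    exact hA6 t (hl1 ▸ ht1) (hl2 ▸ ht2) (hl3 ▸ ht3)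
  obtain ⟨x0, hx0⟩ : ∃ x : ℝ, x = min d ((e-d)^2/(10*d)) := ⟨_, rfl⟩
  have hx0pos : 0 < x0 := by
    rw [hx0]
    have hed : 0 < e - d := by linarith
    exact lt_min hd (by positivity)
  have hx0d : x0 ≤ d := by rw [hx0]; exact min_le_left _ _
  have hx0D : x0 * (10*d) ≤ (e-d)^2 := by
    have h := min_le_right d ((e-d)^2/(10*d))
    rw [hx0]
    exact (le_div_iff₀ (by positivity)).mp h
  by_cases hc2 : 5*(x0/2)^2 + 2*(e-5*d)*(x0/2) + 2*(e+d)*(e-2*d) = 0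
  · by_cases hc3 : 5*(x0/3)^2 + 2*(e-5*d)*(x0/3) + 2*(e+d)*(e-2*d) = 0
    · refine key' (x0/4) (by linarith) (by linarith) (by nlinarith) ?_
      have hval : 5*(x0/4)^2 + 2*(e-5*d)*(x0/4) + 2*(e+d)*(e-2*d)
          = 5*(x0/4-x0/2)*(x0/4-x0/3) := by
        linear_combination (-1/2) * hc2 + (3/2) * hc3
      rw [hval]
      apply ne_of_gt
      nlinarith [mul_pos hx0pos hx0pos]
    · exact key' (x0/3) (by linarith) (by linarith) (by nlinarith) hc3
  · exact key' (x0/2) (by linarith) (by linarith) (by nlinarith) hc2
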